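/- Let E ∈ ℂ not be an eigenvalue of h. Then the corner block g_{1,n} is invertible and T(E) = [[−B_n⁻¹·(g_{1,n})⁻¹, −B_n⁻¹·(g_{1,n})⁻¹·g_{1,1}·C_1], [g_{n,n}·(g_{1,n})⁻¹, g_{n,n}·(g_{1,n})⁻¹·g_{1,1}·C_1 − g_{n,1}·C_1]] (a 2m×2m matrix written in m×m blocks). -/

import Mathlib

open Matrix

noncomputable def tstep {m : ℕ} (A B C : Matrix (Fin m) (Fin m) ℂ) (E : ℂ) :
    Matrix (Fin m ⊕ Fin m) (Fin m ⊕ Fin m) ℂ :=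
  Matrix.fromBlocks (B⁻¹ * (E • 1 - A)) (-(B⁻¹ * C)) 1 0

/-- The transfer matrix `T(E) = t_n(E) ⋯ t_1(E)` (0-indexed: `t_{n-1} ⋯ t_0`). -/
noncomputable def transfer {n m : ℕ} (A B C : Fin n → Matrix (Fin m) (Fin m) ℂ) (E : ℂ) :
    Matrix (Fin m ⊕ Fin m) (Fin m ⊕ Fin m) ℂ :=
  ((List.ofFn fun k : Fin n => tstep (A k) (B k) (C k) E).reverse).prod

/-- The block tridiagonal matrix `h` of the open chain:
diagonal blocks `A_k`, upper blocks `B_k`, lower blocks `C_k`. -/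
noncomputable def hopen {n m : ℕ} (A B C : Fin n → Matrix (Fin m) (Fin m) ℂ) :
    Matrix (Fin n × Fin m) (Fin n × Fin m) ℂ :=
  fun p q =>
    (if p.1 = q.1 then A p.1 p.2 q.2 else 0)
    + (if (p.1 : ℕ) + 1 = (q.1 : ℕ) then B p.1 p.2 q.2 else 0)
    + (if (q.1 : ℕ) + 1 = (p.1 : ℕ) then C p.1 p.2 q.2 else 0)

/-- The `(i,j)` block (of size `m × m`) of an `(nm) × (nm)` matrix. -/
def blk {n m : ℕ} (M : Matrix (Fin n × Fin m) (Fin n × Fin m) ℂ) (i j : Fin n) :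
    Matrix (Fin m) (Fin m) ℂ :=
  fun p q => M (i, p) (j, q)

namespace Stmt7

variable {n m : ℕ}

lemma key (A B C : Fin n → Matrix (Fin m) (Fin m) ℂ) (E : ℂ)
    (hE : IsUnit (hopen A B C - E • 1).det) (i j : Fin n) :
    A i * blk (hopen A B C - E • 1)⁻¹ i j
      + (if h : (i : ℕ) + 1 < n then B i * blk (hopen A B C - E • 1)⁻¹ ⟨(i : ℕ) + 1, h⟩ j else 0)
      + (if h : 0 < (i : ℕ) then
          C i * blk (hopen A B C - E • 1)⁻¹
            ⟨(i : ℕ) - 1, lt_of_le_of_lt (Nat.sub_le _ _) i.isLt⟩ j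
        else 0)
      - E • blk (hopen A B C - E • 1)⁻¹ i j
    = if i = j then 1 else 0 := by
  set g := (hopen A B C - E • 1)⁻¹ with hgdef
  have hHg : (hopen A B C - E • 1) * g = 1 := Matrix.mul_nonsing_inv _ hE
  have h2 : hopen A B C * g - E • g = 1 := by
    rwa [sub_mul, Matrix.smul_mul, Matrix.one_mul] at hHg
  ext p r
  have h1 := congrFun (congrFun h2 (i, p)) (j, r)
  rw [Matrix.sub_apply, Matrix.smul_apply, Matrix.mul_apply, Fintype.sum_prod_type] at h1
  have e1 : ∀ l : Fin n, (∑ q, hopen A B C (i, p) (l, q) * g (l, q) (j, r))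
      = (if i = l then ∑ q, A i p q * g (l, q) (j, r) else 0)
      + (if (i : ℕ) + 1 = (l : ℕ) then ∑ q, B i p q * g (l, q) (j, r) else 0)
      + (if (l : ℕ) + 1 = (i : ℕ) then ∑ q, C i p q * g (l, q) (j, r) else 0) := by
    intro l
    by_cases h1' : i = l <;> by_cases h2' : (i : ℕ) + 1 = (l : ℕ) <;>
      by_cases h3' : (l : ℕ) + 1 = (i : ℕ) <;>
      simp [hopen, h1', h2', h3', add_mul, Finset.sum_add_distrib, Finset.mul_sum]
  rw [Finset.sum_congr rfl fun l _ => e1 l, Finset.sum_add_distrib, Finset.sum_add_distrib] at h1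
  have eB : (∑ l : Fin n, if (i : ℕ) + 1 = (l : ℕ) then ∑ q, B i p q * g (l, q) (j, r) else 0)
      = if h : (i : ℕ) + 1 < n then ∑ q, B i p q * g ((⟨(i : ℕ) + 1, h⟩ : Fin n), q) (j, r)
        else 0 := by
    split
    · next h =>
      have step1 : (∑ l : Fin n, if (i : ℕ) + 1 = (l : ℕ) then ∑ q, B i p q * g (l, q) (j, r) else 0)
          = ∑ l : Fin n, if (⟨(i : ℕ) + 1, h⟩ : Fin n) = l then ∑ q, B i p q * g (l, q) (j, r) else 0 := by
        refine Finset.sum_congr rfl fun l _ => if_congr ?_ rfl rfl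
        rw [Fin.ext_iff]
      rw [step1, Finset.sum_ite_eq]
      simp
    · next h => exact Finset.sum_eq_zero fun l _ => if_neg (by have := l.isLt; omega)
  have eC : (∑ l : Fin n, if (l : ℕ) + 1 = (i : ℕ) then ∑ q, C i p q * g (l, q) (j, r) else 0)
      = if h : 0 < (i : ℕ) then
          ∑ q, C i p q *
            g ((⟨(i : ℕ) - 1, lt_of_le_of_lt (Nat.sub_le _ _) i.isLt⟩ : Fin n), q) (j, r)
        else 0 := by
    split
    · next h =>
      have step1 : (∑ l : Fin n, if (l : ℕ) + 1 = (i : ℕ) then ∑ q, C i p q * g (l, q) (j, r) else 0)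
          = ∑ l : Fin n, if (⟨(i : ℕ) - 1, lt_of_le_of_lt (Nat.sub_le _ _) i.isLt⟩ : Fin n) = l
              then ∑ q, C i p q * g (l, q) (j, r) else 0 := by
        refine Finset.sum_congr rfl fun l _ => if_congr ?_ rfl rfl
        rw [Fin.ext_iff]
        show (l : ℕ) + 1 = (i : ℕ) ↔ (i : ℕ) - 1 = (l : ℕ)
        omega
      rw [step1, Finset.sum_ite_eq]
      simp
    · next h => exact Finset.sum_eq_zero fun l _ => if_neg (by omega)
  rw [eB, eC] at h1
  simp only [Finset.sum_ite_eq, Finset.mem_univ, if_true] at h1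
  rw [show ((if i = j then (1 : Matrix (Fin m) (Fin m) ℂ) else 0) p r)
      = (1 : Matrix (Fin n × Fin m) (Fin n × Fin m) ℂ) (i, p) (j, r) from by
    by_cases hij : i = j <;> simp [hij, Matrix.one_apply, Prod.ext_iff]]
  rw [← h1]
  by_cases hb : (i : ℕ) + 1 < n <;> by_cases hc : 0 < (i : ℕ) <;>
    simp [hb, hc, Matrix.mul_apply, blk, Matrix.sub_apply, Matrix.add_apply,
      Matrix.smul_apply, smul_eq_mul]

-- partial products
noncomputable def W (A B C : Fin n → Matrix (Fin m) (Fin m) ℂ) (E : ℂ) (k : ℕ) :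
    Matrix (Fin m ⊕ Fin m) (Fin m ⊕ Fin m) ℂ :=
  ((List.ofFn fun k : Fin n => tstep (A k) (B k) (C k) E).take k).reverse.prod

lemma W_zero (A B C : Fin n → Matrix (Fin m) (Fin m) ℂ) (E : ℂ) : W A B C E 0 = 1 := rfl

lemma W_succ (A B C : Fin n → Matrix (Fin m) (Fin m) ℂ) (E : ℂ) (k : ℕ) (hk : k < n) :
    W A B C E (k + 1) = tstep (A ⟨k, hk⟩) (B ⟨k, hk⟩) (C ⟨k, hk⟩) E * W A B C E k := by
  unfold W
  rw [List.take_succ, List.getElem?_ofFn, dif_pos hk]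
  simp

lemma transfer_eq_W (A B C : Fin n → Matrix (Fin m) (Fin m) ℂ) (E : ℂ) :
    transfer A B C E = W A B C E n := by
  unfold transfer W
  rw [List.take_of_length_le (by simp)]

-- the algebraic step
lemma step {m : ℕ} (E : ℂ) (Ak Bk Ck P Q S Z : Matrix (Fin m) (Fin m) ℂ) (hBk : IsUnit Bk)
    (hkey : Ak * P + Bk * Q + Ck * S - E • P = Z) :
    Bk⁻¹ * (E • 1 - Ak) * P + (-(Bk⁻¹ * Ck)) * S = Q - Bk⁻¹ * Z := by
  have hB1 : Bk⁻¹ * Bk = 1 :=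
    Matrix.nonsing_inv_mul _ ((Matrix.isUnit_iff_isUnit_det _).1 hBk)
  have h2 : (E • 1 - Ak) * P - Ck * S = Bk * Q - Z := by
    rw [sub_mul, Matrix.smul_mul, Matrix.one_mul, ← hkey]
    abel
  calc Bk⁻¹ * (E • 1 - Ak) * P + (-(Bk⁻¹ * Ck)) * S
      = Bk⁻¹ * ((E • 1 - Ak) * P - Ck * S) := by
        rw [Matrix.mul_assoc Bk⁻¹ (E • 1 - Ak) P, neg_mul, Matrix.mul_assoc,
          ← sub_eq_add_neg, ← Matrix.mul_sub]
    _ = Bk⁻¹ * (Bk * Q - Z) := by rw [h2]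
    _ = Q - Bk⁻¹ * Z := by rw [Matrix.mul_sub, ← Matrix.mul_assoc, hB1, Matrix.one_mul]

-- the two step-maps
noncomputable def Umap (g : Matrix (Fin n × Fin m) (Fin n × Fin m) ℂ)
    (X : Matrix (Fin m) (Fin m) ℂ) (j : Fin n) (k : ℕ) : Matrix (Fin m) (Fin m) ℂ :=
  if h : k < n then blk g ⟨k, h⟩ j else X

noncomputable def Lmap (g : Matrix (Fin n × Fin m) (Fin n × Fin m) ℂ)
    (X Y : Matrix (Fin m) (Fin m) ℂ) (j : Fin n) (k : ℕ) : Matrix (Fin m) (Fin m) ℂ :=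
  if k = 0 then Y else Umap g X j (k - 1)

lemma Lmap_succ (g : Matrix (Fin n × Fin m) (Fin n × Fin m) ℂ)
    (X Y : Matrix (Fin m) (Fin m) ℂ) (j : Fin n) (k : ℕ) :
    Lmap g X Y j (k + 1) = Umap g X j k := by
  simp [Lmap]

lemma shift1 {α : Type*} [AddCommGroup α] {x y z w : α} (h : x + y + 0 - z = w) :
    x + y + -w - z = 0 := by rw [← h]; abel

end Stmt7

/-- `g_{1,n}` is invertible and `T(E)` is expressed through the corner blocks of
the resolvent `g(E) = (h - E·1)⁻¹`. -/
theorem stmt7 {n m : ℕ} (hn : 2 ≤ n) (hm : 1 ≤ m)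
    (A B C : Fin n → Matrix (Fin m) (Fin m) ℂ)
    (hB : ∀ k, IsUnit (B k)) (hC : ∀ k, IsUnit (C k)) (E : ℂ)
    (hE : IsUnit (hopen A B C - E • 1).det) :
    let g := (hopen A B C - E • 1)⁻¹
    let g1n := blk g ⟨0, by omega⟩ ⟨n - 1, by omega⟩
    let g11 := blk g ⟨0, by omega⟩ ⟨0, by omega⟩
    let gnn := blk g ⟨n - 1, by omega⟩ ⟨n - 1, by omega⟩
    let gn1 := blk g ⟨n - 1, by omega⟩ ⟨0, by omega⟩
    IsUnit g1n ∧
    transfer A B C E =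
      Matrix.fromBlocks
        (-(B ⟨n - 1, by omega⟩)⁻¹ * g1n⁻¹)
        (-(B ⟨n - 1, by omega⟩)⁻¹ * g1n⁻¹ * g11 * C ⟨0, by omega⟩)
        (gnn * g1n⁻¹)
        (gnn * g1n⁻¹ * g11 * C ⟨0, by omega⟩ - gn1 * C ⟨0, by omega⟩) := by
  intro g g1n g11 gnn gn1
  have h0n : 0 < n := by omega
  have hlast : n - 1 < n := by omega
  have detB : ∀ k, IsUnit (B k).det := fun k => (Matrix.isUnit_iff_isUnit_det _).1 (hB k)
  have detC : ∀ k, IsUnit (C k).det := fun k => (Matrix.isUnit_iff_isUnit_det _).1 (hC k)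
  have main : ∀ k, k ≤ n →
      Stmt7.W A B C E k * Matrix.fromBlocks g1n g11 0 (-(C ⟨0, h0n⟩)⁻¹)
        = Matrix.fromBlocks
            (Stmt7.Umap g (-(B ⟨n - 1, hlast⟩)⁻¹) ⟨n - 1, hlast⟩ k)
            (Stmt7.Umap g 0 ⟨0, h0n⟩ k)
            (Stmt7.Lmap g (-(B ⟨n - 1, hlast⟩)⁻¹) 0 ⟨n - 1, hlast⟩ k)
            (Stmt7.Lmap g 0 (-(C ⟨0, h0n⟩)⁻¹) ⟨0, h0n⟩ k) := by
    intro k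
    induction k with
    | zero =>
      intro _
      rw [Stmt7.W_zero, Matrix.one_mul]
      simp only [Stmt7.Umap, Stmt7.Lmap, dif_pos h0n, if_pos rfl]
      rfl
    | succ k ih =>
      intro hk1
      have hk : k < n := hk1
      rw [Stmt7.W_succ A B C E k hk, Matrix.mul_assoc, ih (le_of_lt hk), tstep,
        Matrix.fromBlocks_multiply, Stmt7.Lmap_succ, Stmt7.Lmap_succ]
      rw [Matrix.fromBlocks_inj]
      refine ⟨?_, ?_, by rw [Matrix.one_mul, Matrix.zero_mul, add_zero],
        by rw [Matrix.one_mul, Matrix.zero_mul, add_zero]⟩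
      · -- U recursion (source column n-1)
        rw [show Stmt7.Umap g (-(B ⟨n - 1, hlast⟩)⁻¹) ⟨n - 1, hlast⟩ k
            = blk g ⟨k, hk⟩ ⟨n - 1, hlast⟩ from dif_pos hk]
        by_cases hb : k + 1 < n
        · rw [show Stmt7.Umap g (-(B ⟨n - 1, hlast⟩)⁻¹) ⟨n - 1, hlast⟩ (k + 1)
              = blk g ⟨k + 1, hb⟩ ⟨n - 1, hlast⟩ from dif_pos hb]
          by_cases h0 : k = 0
          · subst h0
            rw [show Stmt7.Lmap g (-(B ⟨n - 1, hlast⟩)⁻¹) 0 ⟨n - 1, hlast⟩ 0 = 0 from rfl]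
            have hkey := Stmt7.key A B C E hE ⟨0, hk⟩ ⟨n - 1, hlast⟩
            rw [dif_pos (show ((⟨0, hk⟩ : Fin n) : ℕ) + 1 < n from hb),
              dif_neg (show ¬ 0 < ((⟨0, hk⟩ : Fin n) : ℕ) from by simp),
              if_neg (show ¬ (⟨0, hk⟩ : Fin n) = ⟨n - 1, hlast⟩ from by
                simp only [Fin.mk.injEq]; omega)] at hkey
            have hkey2 : A ⟨0, hk⟩ * blk g ⟨0, hk⟩ ⟨n - 1, hlast⟩
                + B ⟨0, hk⟩ * blk g ⟨0 + 1, hb⟩ ⟨n - 1, hlast⟩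
                + C ⟨0, hk⟩ * 0 - E • blk g ⟨0, hk⟩ ⟨n - 1, hlast⟩ = 0 := by
              rw [Matrix.mul_zero]; exact hkey
            have hs := Stmt7.step E _ _ _ _ _ _ _ (hB ⟨0, hk⟩) hkey2
            simpa using hs
          · have hkpos : 0 < k := Nat.pos_of_ne_zero h0
            rw [show Stmt7.Lmap g (-(B ⟨n - 1, hlast⟩)⁻¹) 0 ⟨n - 1, hlast⟩ k
                = blk g ⟨k - 1, by omega⟩ ⟨n - 1, hlast⟩ from by
              simp only [Stmt7.Lmap, Stmt7.Umap]
              rw [if_neg h0, dif_pos (show k - 1 < n from by omega)]]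
            have hkey := Stmt7.key A B C E hE ⟨k, hk⟩ ⟨n - 1, hlast⟩
            rw [dif_pos (show ((⟨k, hk⟩ : Fin n) : ℕ) + 1 < n from hb),
              dif_pos (show 0 < ((⟨k, hk⟩ : Fin n) : ℕ) from hkpos),
              if_neg (show ¬ (⟨k, hk⟩ : Fin n) = ⟨n - 1, hlast⟩ from by
                simp only [Fin.mk.injEq]; omega)] at hkey
            have hs := Stmt7.step E _ _ _ _ _ _ _ (hB ⟨k, hk⟩) hkey
            simpa using hs
        · -- k + 1 = n
          have hkn : k = n - 1 := by omega
          subst hkn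
          rw [show Stmt7.Umap g (-(B ⟨n - 1, hlast⟩)⁻¹) ⟨n - 1, hlast⟩ (n - 1 + 1)
              = -(B ⟨n - 1, hlast⟩)⁻¹ from dif_neg hb]
          have hkpos : 0 < n - 1 := by omega
          rw [show Stmt7.Lmap g (-(B ⟨n - 1, hlast⟩)⁻¹) 0 ⟨n - 1, hlast⟩ (n - 1)
              = blk g ⟨n - 1 - 1, by omega⟩ ⟨n - 1, hlast⟩ from by
            simp only [Stmt7.Lmap, Stmt7.Umap]
            rw [if_neg (by omega), dif_pos (show n - 1 - 1 < n from by omega)]]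
          have hkey := Stmt7.key A B C E hE ⟨n - 1, hk⟩ ⟨n - 1, hlast⟩
          rw [dif_neg (show ¬ ((⟨n - 1, hk⟩ : Fin n) : ℕ) + 1 < n from hb),
            dif_pos (show 0 < ((⟨n - 1, hk⟩ : Fin n) : ℕ) from hkpos),
            if_pos (show (⟨n - 1, hk⟩ : Fin n) = ⟨n - 1, hlast⟩ from rfl)] at hkey
          have hkey2 : A ⟨n - 1, hk⟩ * blk g ⟨n - 1, hk⟩ ⟨n - 1, hlast⟩
              + B ⟨n - 1, hk⟩ * 0
              + C ⟨n - 1, hk⟩ * blk g ⟨n - 1 - 1, by omega⟩ ⟨n - 1, hlast⟩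
              - E • blk g ⟨n - 1, hk⟩ ⟨n - 1, hlast⟩ = 1 := by
            rw [Matrix.mul_zero]; exact hkey
          have hs := Stmt7.step E _ _ _ _ _ _ _ (hB ⟨n - 1, hk⟩) hkey2
          simpa using hs
      · -- V recursion (source column 0)
        rw [show Stmt7.Umap g 0 ⟨0, h0n⟩ k = blk g ⟨k, hk⟩ ⟨0, h0n⟩ from dif_pos hk]
        by_cases hb : k + 1 < n
        · rw [show Stmt7.Umap g 0 ⟨0, h0n⟩ (k + 1)
              = blk g ⟨k + 1, hb⟩ ⟨0, h0n⟩ from dif_pos hb]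
          by_cases h0 : k = 0
          · subst h0
            rw [show Stmt7.Lmap g 0 (-(C ⟨0, h0n⟩)⁻¹) ⟨0, h0n⟩ 0
                = -(C ⟨0, h0n⟩)⁻¹ from rfl]
            have hkey := Stmt7.key A B C E hE ⟨0, hk⟩ ⟨0, h0n⟩
            rw [dif_pos (show ((⟨0, hk⟩ : Fin n) : ℕ) + 1 < n from hb),
              dif_neg (show ¬ 0 < ((⟨0, hk⟩ : Fin n) : ℕ) from by simp),
              if_pos (show (⟨0, hk⟩ : Fin n) = ⟨0, h0n⟩ from rfl)] at hkey
            have hCC : C ⟨0, hk⟩ * (-(C ⟨0, h0n⟩)⁻¹) = -1 := by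
              rw [Matrix.mul_neg, Matrix.mul_nonsing_inv _ (detC ⟨0, h0n⟩)]
            have hkey2 : A ⟨0, hk⟩ * blk g ⟨0, hk⟩ ⟨0, h0n⟩
                + B ⟨0, hk⟩ * blk g ⟨0 + 1, hb⟩ ⟨0, h0n⟩
                + C ⟨0, hk⟩ * (-(C ⟨0, h0n⟩)⁻¹) - E • blk g ⟨0, hk⟩ ⟨0, h0n⟩ = 0 := by
              rw [hCC]; exact Stmt7.shift1 hkey
            have hs := Stmt7.step E _ _ _ _ _ _ _ (hB ⟨0, hk⟩) hkey2
            simpa using hs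
          · have hkpos : 0 < k := Nat.pos_of_ne_zero h0
            rw [show Stmt7.Lmap g 0 (-(C ⟨0, h0n⟩)⁻¹) ⟨0, h0n⟩ k
                = blk g ⟨k - 1, by omega⟩ ⟨0, h0n⟩ from by
              simp only [Stmt7.Lmap, Stmt7.Umap]
              rw [if_neg h0, dif_pos (show k - 1 < n from by omega)]]
            have hkey := Stmt7.key A B C E hE ⟨k, hk⟩ ⟨0, h0n⟩
            rw [dif_pos (show ((⟨k, hk⟩ : Fin n) : ℕ) + 1 < n from hb),
              dif_pos (show 0 < ((⟨k, hk⟩ : Fin n) : ℕ) from hkpos),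
              if_neg (show ¬ (⟨k, hk⟩ : Fin n) = ⟨0, h0n⟩ from by
                simp only [Fin.mk.injEq]; omega)] at hkey
            have hs := Stmt7.step E _ _ _ _ _ _ _ (hB ⟨k, hk⟩) hkey
            simpa using hs
        · have hkn : k = n - 1 := by omega
          subst hkn
          rw [show Stmt7.Umap g 0 ⟨0, h0n⟩ (n - 1 + 1) = 0 from dif_neg hb]
          have hkpos : 0 < n - 1 := by omega
          rw [show Stmt7.Lmap g 0 (-(C ⟨0, h0n⟩)⁻¹) ⟨0, h0n⟩ (n - 1)
              = blk g ⟨n - 1 - 1, by omega⟩ ⟨0, h0n⟩ from by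
            simp only [Stmt7.Lmap, Stmt7.Umap]
            rw [if_neg (by omega), dif_pos (show n - 1 - 1 < n from by omega)]]
          have hkey := Stmt7.key A B C E hE ⟨n - 1, hk⟩ ⟨0, h0n⟩
          rw [dif_neg (show ¬ ((⟨n - 1, hk⟩ : Fin n) : ℕ) + 1 < n from hb),
            dif_pos (show 0 < ((⟨n - 1, hk⟩ : Fin n) : ℕ) from hkpos),
            if_neg (show ¬ (⟨n - 1, hk⟩ : Fin n) = ⟨0, h0n⟩ from by
              simp only [Fin.mk.injEq]; omega)] at hkey
          have hkey2 : A ⟨n - 1, hk⟩ * blk g ⟨n - 1, hk⟩ ⟨0, h0n⟩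
              + B ⟨n - 1, hk⟩ * 0
              + C ⟨n - 1, hk⟩ * blk g ⟨n - 1 - 1, by omega⟩ ⟨0, h0n⟩
              - E • blk g ⟨n - 1, hk⟩ ⟨0, h0n⟩ = 0 := by
            rw [Matrix.mul_zero]; exact hkey
          have hs := Stmt7.step E _ _ _ _ _ _ _ (hB ⟨n - 1, hk⟩) hkey2
          simpa using hs
  -- use the product identity at k = n
  have hTM := main n le_rfl
  rw [← Stmt7.transfer_eq_W A B C E] at hTM
  have hU : Stmt7.Umap g (-(B ⟨n - 1, hlast⟩)⁻¹) ⟨n - 1, hlast⟩ n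
      = -(B ⟨n - 1, hlast⟩)⁻¹ := dif_neg (lt_irrefl n)
  have hV : Stmt7.Umap (n := n) g 0 ⟨0, h0n⟩ n = 0 := dif_neg (lt_irrefl n)
  have hLu : Stmt7.Lmap g (-(B ⟨n - 1, hlast⟩)⁻¹) 0 ⟨n - 1, hlast⟩ n = gnn := by
    simp only [Stmt7.Lmap, Stmt7.Umap]
    rw [if_neg (by omega), dif_pos hlast]
  have hLv : Stmt7.Lmap g 0 (-(C ⟨0, h0n⟩)⁻¹) ⟨0, h0n⟩ n = gn1 := by
    simp only [Stmt7.Lmap, Stmt7.Umap]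
    rw [if_neg (by omega), dif_pos hlast]
  rw [hU, hV, hLu, hLv, ← Matrix.fromBlocks_toBlocks (transfer A B C E),
    Matrix.fromBlocks_multiply, Matrix.fromBlocks_inj] at hTM
  obtain ⟨e11, e12, e21, e22⟩ := hTM
  rw [Matrix.mul_zero, add_zero] at e11 e21
  have hg1nU : IsUnit g1n := (Matrix.isUnit_iff_isUnit_det _).2 <| Matrix.isUnit_det_of_left_inverse
    (show (-(B ⟨n - 1, hlast⟩) * (transfer A B C E).toBlocks₁₁) * g1n = 1 from by
      rw [Matrix.mul_assoc, e11, neg_mul_neg, Matrix.mul_nonsing_inv _ (detB ⟨n - 1, hlast⟩)])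
  have hgg : g1n * g1n⁻¹ = 1 :=
    Matrix.mul_nonsing_inv _ ((Matrix.isUnit_iff_isUnit_det _).1 hg1nU)
  have hCinv : (C ⟨0, h0n⟩)⁻¹ * C ⟨0, h0n⟩ = 1 := Matrix.nonsing_inv_mul _ (detC _)
  have hT11 : (transfer A B C E).toBlocks₁₁ = -(B ⟨n - 1, hlast⟩)⁻¹ * g1n⁻¹ := by
    have h : (transfer A B C E).toBlocks₁₁ * g1n * g1n⁻¹
        = -(B ⟨n - 1, hlast⟩)⁻¹ * g1n⁻¹ := congrArg (· * g1n⁻¹) e11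
    rwa [Matrix.mul_assoc, hgg, Matrix.mul_one] at h
  have hT21 : (transfer A B C E).toBlocks₂₁ = gnn * g1n⁻¹ := by
    have h : (transfer A B C E).toBlocks₂₁ * g1n * g1n⁻¹ = gnn * g1n⁻¹ :=
      congrArg (· * g1n⁻¹) e21
    rwa [Matrix.mul_assoc, hgg, Matrix.mul_one] at h
  have hT12 : (transfer A B C E).toBlocks₁₂
      = -(B ⟨n - 1, hlast⟩)⁻¹ * g1n⁻¹ * g11 * C ⟨0, h0n⟩ := by
    rw [Matrix.mul_neg, add_neg_eq_zero] at e12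
    have h : (transfer A B C E).toBlocks₁₁ * g11 * C ⟨0, h0n⟩
        = (transfer A B C E).toBlocks₁₂ * (C ⟨0, h0n⟩)⁻¹ * C ⟨0, h0n⟩ :=
      congrArg (· * C ⟨0, h0n⟩) e12
    rw [Matrix.mul_assoc ((transfer A B C E).toBlocks₁₂), hCinv, Matrix.mul_one] at h
    rw [← h, hT11]
  have hT22 : (transfer A B C E).toBlocks₂₂
      = gnn * g1n⁻¹ * g11 * C ⟨0, h0n⟩ - gn1 * C ⟨0, h0n⟩ := by
    have h : ((transfer A B C E).toBlocks₂₁ * g11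
          + (transfer A B C E).toBlocks₂₂ * (-(C ⟨0, h0n⟩)⁻¹)) * C ⟨0, h0n⟩
        = gn1 * C ⟨0, h0n⟩ := congrArg (· * C ⟨0, h0n⟩) e22
    rw [add_mul, Matrix.mul_assoc ((transfer A B C E).toBlocks₂₂), Matrix.neg_mul, hCinv,
      Matrix.mul_neg, Matrix.mul_one] at h
    have h2 : (transfer A B C E).toBlocks₂₂
        = (transfer A B C E).toBlocks₂₁ * g11 * C ⟨0, h0n⟩ - gn1 * C ⟨0, h0n⟩ := by
      rw [← h]; abel
    rw [h2, hT21]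
  exact ⟨hg1nU, by
    rw [← Matrix.fromBlocks_toBlocks (transfer A B C E), hT11, hT12, hT21, hT22]⟩
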